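/- Let Γ be a rooted digraph satisfying P0, P1, P2 and P3. Then the digraph obtained from Γ by deleting the root α has at least two infinite connected components. -/

import Mathlib

variable {V : Type*}

/-- Directed walks of length `n` (`n`-arcs). -/
def arcOf (E : V → V → Prop) : ℕ → V → V → Prop
  | 0 => fun x y => x = y
  | n + 1 => fun x y => ∃ z, E x z ∧ arcOf E n z y

/-- Vertices reachable from `x` by a directed path of length exactly `n`. -/
def descN (E : V → V → Prop) (n : ℕ) (x : V) : Set V := {y | arcOf E n x y}

/-- The descendant set of `x` (including `x` itself). -/
def desc (E : V → V → Prop) (x : V) : Set V := {y | ∃ n, arcOf E n x y}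

theorem self_mem_desc (E : V → V → Prop) (x : V) : x ∈ desc E x := ⟨0, by simp [arcOf]⟩

def descSet (E : V → V → Prop) (S : Set V) : Set V := ⋃ x ∈ S, desc E x

theorem self_mem_descSet (E : V → V → Prop) {S : Set V} {x : V} (hx : x ∈ S) :
    x ∈ descSet E S := Set.mem_biUnion hx (self_mem_desc E x)

def outSet (E : V → V → Prop) (x : V) : Set V := {y | E x y}

def inSet (E : V → V → Prop) (x : V) : Set V := {y | E y x}

def IsAut (E : V → V → Prop) (g : Equiv.Perm V) : Prop := ∀ x y, E x y ↔ E (g x) (g y)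

def Rooted (E : V → V → Prop) (α : V) : Prop := ∀ y, y ∈ desc E α

def P0 (E : V → V → Prop) (α : V) (m : ℕ) : Prop :=
  0 < m ∧ (∀ x, (outSet E x).Finite ∧ (outSet E x).ncard = m) ∧
    ∀ s t : ℕ, s ≠ t → Disjoint (descN E s α) (descN E t α)

def P1 (E : V → V → Prop) : Prop :=
  ∀ u : V, ∃ f : desc E u ≃ V, ∀ x y : desc E u, (E x.1 y.1 ↔ E (f x) (f y))

def P2 (E : V → V → Prop) (α : V) : Prop :=
  ∀ i : ℕ, ∀ x ∈ descN E i α, ∀ y ∈ descN E i α,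
    ∃ g : Equiv.Perm V, IsAut E g ∧ g α = α ∧ g x = y

def P3 (E : V → V → Prop) (α : V) : Prop :=
  ∀ i : ℕ, (descN E i α).ncard < (descN E (i + 1) α).ncard

def EdgeTrans (E : V → V → Prop) : Prop :=
  ∀ a b c d : V, E a b → E c d → ∃ g : Equiv.Perm V, IsAut E g ∧ g a = c ∧ g b = d

def VertexTrans (E : V → V → Prop) : Prop :=
  ∀ u v : V, ∃ g : Equiv.Perm V, IsAut E g ∧ g u = v

def NoDirectedCycles (E : V → V → Prop) : Prop :=
  ∀ s : ℕ, 1 ≤ s → ∀ x : V, ¬ arcOf E s x x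

def HasPropZ {W : Type*} (E : W → W → Prop) : Prop :=
  ∃ f : W → ℤ, Function.Surjective f ∧ ∀ x y : W, E x y → f y = f x + 1

def deltaSetoid (E : V → V → Prop) (n : ℕ) : Setoid V :=
  ⟨fun u v => descN E n u = descN E n v, ⟨fun _ => rfl, Eq.symm, Eq.trans⟩⟩

def QEdge (E : V → V → Prop) (n : ℕ)
    (A B : Quotient (deltaSetoid E n)) : Prop :=
  ∃ a b : V, Quotient.mk (deltaSetoid E n) a = A ∧ Quotient.mk (deltaSetoid E n) b = B ∧ E a b

def cls (E : V → V → Prop) (n : ℕ) (v : V) : Set V := {u | descN E n u = descN E n v}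

def QEdgeSet (E : V → V → Prop) (A B : Set V) : Prop := ∃ a ∈ A, ∃ b ∈ B, E a b

def WDH (E : V → V → Prop) : Prop :=
  VertexTrans E ∧
  ∀ (X Y : Finset V) (f : descSet E (↑X : Set V) ≃ descSet E (↑Y : Set V)),
    (∀ a b : descSet E (↑X : Set V), (E a.1 b.1 ↔ E (f a).1 (f b).1)) →
    ∃ g : Equiv.Perm V, IsAut E g ∧
      ∀ (x : V) (hx : x ∈ X), g x = (f ⟨x, self_mem_descSet E (by exact_mod_cast hx)⟩).1

def EdgeT (E : V → V → Prop) := {p : V × V // E p.1 p.2}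

def reachSetoid (E : V → V → Prop) : Setoid (EdgeT E) :=
  ⟨Relation.EqvGen (fun a b => a.1.1 = b.1.1 ∨ a.1.2 = b.1.2),
    Relation.EqvGen.is_equivalence _⟩

def AlSources (E : V → V → Prop) (A : Quotient (reachSetoid E)) : Set V :=
  {v | ∃ e : EdgeT E, Quotient.mk (reachSetoid E) e = A ∧ v = e.1.1}

def AlSinks (E : V → V → Prop) (A : Quotient (reachSetoid E)) : Set V :=
  {v | ∃ e : EdgeT E, Quotient.mk (reachSetoid E) e = A ∧ v = e.1.2}

def AlEdge (E : V → V → Prop) (A B : Quotient (reachSetoid E)) : Prop :=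
  ∃ v, v ∈ AlSinks E A ∧ v ∈ AlSources E B

/- ======================== auxiliary development ======================== -/

section AuxDev

open Relation

variable {V : Type*} {E : V → V → Prop} {α : V} {m : ℕ}

theorem arcOf_snoc {n : ℕ} {x y z : V} (h : arcOf E n x y) (hE : E y z) :
    arcOf E (n + 1) x z := by
  induction n generalizing x with
  | zero => exact ⟨z, by rwa [show x = y from h], rfl⟩
  | succ n ih =>
      obtain ⟨w, hxw, hwy⟩ := h
      exact ⟨w, hxw, ih hwy⟩

theorem arcOf_snoc_iff {n : ℕ} {x y : V} :
    arcOf E (n + 1) x y ↔ ∃ z, arcOf E n x z ∧ E z y := by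
  constructor
  · intro h
    induction n generalizing x with
    | zero =>
        obtain ⟨z, hxz, hzy⟩ := h
        exact ⟨x, rfl, by rwa [show z = y from hzy] at hxz⟩
    | succ n ih =>
        obtain ⟨w, hxw, hwy⟩ := h
        obtain ⟨z, hz, hzy⟩ := ih hwy
        exact ⟨z, ⟨w, hxw, hz⟩, hzy⟩
  · rintro ⟨z, hxz, hzy⟩
    exact arcOf_snoc hxz hzy

theorem arcOf_append {n k : ℕ} {x y z : V} (h1 : arcOf E n x y) (h2 : arcOf E k y z) :
    arcOf E (n + k) x z := by
  induction k generalizing z with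
  | zero => rwa [show y = z from h2] at h1
  | succ k ih =>
      obtain ⟨w, hw, hwz⟩ := arcOf_snoc_iff.mp h2
      exact arcOf_snoc (ih hw) hwz

theorem arcOf_split {j r : ℕ} {x y : V} (h : arcOf E (j + r) x y) :
    ∃ z, arcOf E j x z ∧ arcOf E r z y := by
  induction j generalizing x with
  | zero => exact ⟨x, rfl, by simpa using h⟩
  | succ j ih =>
      have h' : arcOf E ((j + r) + 1) x y := by
        rwa [show j + 1 + r = (j + r) + 1 by omega] at h
      obtain ⟨w, hxw, hwy⟩ := h'
      obtain ⟨z, hjz, hr⟩ := ih hwy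
      exact ⟨z, ⟨w, hxw, hjz⟩, hr⟩

theorem desc_trans {u x z : V} (hx : x ∈ desc E u) (hz : z ∈ desc E x) : z ∈ desc E u := by
  obtain ⟨n, hn⟩ := hx; obtain ⟨k, hk⟩ := hz
  exact ⟨n + k, arcOf_append hn hk⟩

theorem desc_of_edge {u x z : V} (hx : x ∈ desc E u) (hE : E x z) : z ∈ desc E u := by
  obtain ⟨n, hn⟩ := hx
  exact ⟨n + 1, arcOf_snoc hn hE⟩

/-- level uniqueness -/
theorem level_unique (h0 : P0 E α m) {x : V} {s t : ℕ}
    (hs : x ∈ descN E s α) (ht : x ∈ descN E t α) : s = t := by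
  by_contra hne
  exact Set.disjoint_left.mp (h0.2.2 s t hne) hs ht

theorem level_of_desc {u x : V} {t n : ℕ} (hu : u ∈ descN E t α) (hx : arcOf E n u x) :
    x ∈ descN E (t + n) α := arcOf_append hu hx

theorem edge_level {x y : V} {s : ℕ} (hx : x ∈ descN E s α) (hE : E x y) :
    y ∈ descN E (s + 1) α := arcOf_snoc hx hE

theorem outSet_nonempty (h0 : P0 E α m) (x : V) : (outSet E x).Nonempty := by
  apply Set.nonempty_of_ncard_ne_zero
  rw [(h0.2.1 x).2]
  exact h0.1.ne'

theorem descN_nonempty (h0 : P0 E α m) (x : V) (n : ℕ) : (descN E n x).Nonempty := by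
  induction n with
  | zero => exact ⟨x, rfl⟩
  | succ n ih =>
      obtain ⟨y, hy⟩ := ih
      obtain ⟨z, hz⟩ := outSet_nonempty h0 y
      exact ⟨z, arcOf_snoc hy hz⟩

theorem level_finite (h0 : P0 E α m) (s : ℕ) : (descN E s α).Finite := by
  induction s with
  | zero => exact Set.Finite.subset (Set.finite_singleton α) (fun x hx => by
      simp only [Set.mem_singleton_iff]; exact (show α = x from hx).symm)
  | succ s ih =>
      apply Set.Finite.subset (Set.Finite.biUnion ih (fun x _ => (h0.2.1 x).1))
      intro y hy
      obtain ⟨z, hz, hzy⟩ := arcOf_snoc_iff.mp hy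
      exact Set.mem_biUnion hz hzy

theorem in_nbr {w : V} {s : ℕ} (hw : w ∈ descN E (s + 1) α) :
    ∃ z, z ∈ descN E s α ∧ E z w := by
  obtain ⟨z, hz, hzw⟩ := arcOf_snoc_iff.mp hw
  exact ⟨z, hz, hzw⟩

theorem no_edge_to_root (h0 : P0 E α m) (hroot : Rooted E α) {z : V} (hE : E z α) : False := by
  obtain ⟨t, ht⟩ := hroot z
  have h1 : α ∈ descN E (t + 1) α := edge_level ht hE
  have h0' : α ∈ descN E 0 α := rfl
  exact Nat.succ_ne_zero t (level_unique h0 h1 h0')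

/- ===== P1 machinery: the isomorphism desc u ≃ V sends u to α ===== -/

theorem root_or_in_nbr (hroot : Rooted E α) {β : V} (hβ : β ≠ α) : ∃ z, E z β := by
  obtain ⟨s, hs⟩ := hroot β
  cases s with
  | zero => exact absurd (show α = β from hs).symm hβ
  | succ s =>
      obtain ⟨z, _, hzβ⟩ := arcOf_snoc_iff.mp hs
      exact ⟨z, hzβ⟩

theorem iso_arc_map {u : V} (f : desc E u ≃ V)
    (hf : ∀ x y : desc E u, (E x.1 y.1 ↔ E (f x) (f y)))
    {n : ℕ} (x y : desc E u) (h : arcOf E n x.1 y.1) : arcOf E n (f x) (f y) := by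
  induction n generalizing x with
  | zero =>
      have : x = y := Subtype.ext h
      rw [this]
      rfl
  | succ n ih =>
      obtain ⟨z, hxz, hzy⟩ := h
      have hz : z ∈ desc E u := desc_of_edge x.2 hxz
      exact ⟨f ⟨z, hz⟩, (hf x ⟨z, hz⟩).mp hxz, ih ⟨z, hz⟩ hzy⟩

theorem iso_arc_map_inv {u : V} (f : desc E u ≃ V)
    (hf : ∀ x y : desc E u, (E x.1 y.1 ↔ E (f x) (f y)))
    {n : ℕ} (a b : V) (h : arcOf E n a b) :
    arcOf E n (f.symm a).1 (f.symm b).1 := by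
  induction n generalizing a with
  | zero => rw [show a = b from h]; rfl
  | succ n ih =>
      obtain ⟨z, haz, hzb⟩ := h
      refine ⟨(f.symm z).1, ?_, ih z hzb⟩
      exact (hf (f.symm a) (f.symm z)).mpr (by simpa using haz)

theorem iso_root (h0 : P0 E α m) (hroot : Rooted E α) {u : V} (f : desc E u ≃ V)
    (hf : ∀ x y : desc E u, (E x.1 y.1 ↔ E (f x) (f y))) :
    f ⟨u, self_mem_desc E u⟩ = α := by
  by_contra hne
  obtain ⟨z, hz⟩ := root_or_in_nbr hroot hne
  -- z = f (f.symm z), so E (f.symm z).1 u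
  have hz' : E (f (f.symm z)) (f ⟨u, self_mem_desc E u⟩) := by simpa using hz
  have hEu : E (f.symm z).1 u := (hf _ _).mpr hz'
  obtain ⟨t, ht⟩ := hroot u
  obtain ⟨r, hr⟩ := (f.symm z).2
  have h1 : (f.symm z).1 ∈ descN E (t + r) α := level_of_desc ht hr
  have h2 : u ∈ descN E (t + r + 1) α := edge_level h1 hEu
  have := level_unique h0 ht h2
  omega

theorem descN_image (h0 : P0 E α m) (hroot : Rooted E α) {u : V} (f : desc E u ≃ V)
    (hf : ∀ x y : desc E u, (E x.1 y.1 ↔ E (f x) (f y))) (n : ℕ) :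
    descN E n u = (fun b => (f.symm b).1) '' (descN E n α) := by
  have hfu : f ⟨u, self_mem_desc E u⟩ = α := iso_root h0 hroot f hf
  have hfsymm : f.symm α = ⟨u, self_mem_desc E u⟩ := by rw [← hfu]; simp
  ext y
  constructor
  · intro hy
    have hy' : y ∈ desc E u := ⟨n, hy⟩
    refine ⟨f ⟨y, hy'⟩, ?_, by simp⟩
    have := iso_arc_map f hf ⟨u, self_mem_desc E u⟩ ⟨y, hy'⟩ hy
    rwa [hfu] at this
  · rintro ⟨b, hb, rfl⟩
    have := iso_arc_map_inv f hf α b hb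
    rwa [hfsymm] at this

theorem card_descN (h0 : P0 E α m) (hroot : Rooted E α) (h1 : P1 E) (u : V) (n : ℕ) :
    (descN E n u).ncard = (descN E n α).ncard := by
  obtain ⟨f, hf⟩ := h1 u
  rw [descN_image h0 hroot f hf n]
  apply Set.ncard_image_of_injective
  intro a b hab
  have : f.symm a = f.symm b := Subtype.ext hab
  simpa using congrArg f this

/- ===== Ancestor sets at level 1, and automorphism transfer ===== -/

/-- The set of level-1 ancestors of `z`. -/
def NwA (E : V → V → Prop) (α z : V) : Set V := {u | u ∈ descN E 1 α ∧ z ∈ desc E u}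

/-- Relation on level `j`: both in level `j` and descendant sets meet. -/
def meetRel (E : V → V → Prop) (α : V) (j : ℕ) : V → V → Prop :=
  fun a b => a ∈ descN E j α ∧ b ∈ descN E j α ∧ (desc E a ∩ desc E b).Nonempty

theorem descN_one : descN E 1 α = outSet E α := by
  ext y
  constructor
  · rintro ⟨z, hz, hzy⟩
    rwa [show z = y from hzy] at hz
  · intro h
    exact ⟨y, h, rfl⟩

theorem card_level_one (h0 : P0 E α m) : (descN E 1 α).ncard = m := by
  rw [descN_one]; exact (h0.2.1 α).2

theorem NwA_subset_L1 (z : V) : NwA E α z ⊆ descN E 1 α := fun _ hu => hu.1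

theorem NwA_mono_edge {z z' : V} (hE : E z z') : NwA E α z ⊆ NwA E α z' :=
  fun u hu => ⟨hu.1, desc_of_edge hu.2 hE⟩

theorem aut_arc {g : Equiv.Perm V} (hg : IsAut E g) {n : ℕ} {x y : V}
    (h : arcOf E n x y) : arcOf E n (g x) (g y) := by
  induction n generalizing x with
  | zero => rw [show x = y from h]; rfl
  | succ n ih =>
      obtain ⟨z, hxz, hzy⟩ := h
      exact ⟨g z, (hg x z).mp hxz, ih hzy⟩

theorem isAut_symm {g : Equiv.Perm V} (hg : IsAut E g) : IsAut E g.symm := by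
  intro x y
  have := hg (g.symm x) (g.symm y)
  rw [Equiv.apply_symm_apply, Equiv.apply_symm_apply] at this
  exact this.symm

theorem NwA_image {g : Equiv.Perm V} (hg : IsAut E g) (hgα : g α = α) (z : V) :
    NwA E α (g z) = (g : V → V) '' NwA E α z := by
  have hgsα : g.symm α = α := by
    conv_lhs => rw [← hgα]
    exact Equiv.symm_apply_apply g α
  ext u'
  constructor
  · rintro ⟨h1', n, h2'⟩
    refine ⟨g.symm u', ⟨?_, ?_⟩, by simp⟩
    · have := aut_arc (isAut_symm hg) h1'
      rwa [hgsα] at this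
    · have := aut_arc (isAut_symm hg) h2'
      simp only [Equiv.symm_apply_apply] at this
      exact ⟨n, this⟩
  · rintro ⟨u, ⟨hu1, n, hu2⟩, rfl⟩
    constructor
    · have := aut_arc hg hu1
      rwa [hgα] at this
    · exact ⟨n, aut_arc hg hu2⟩

theorem card_NwA_level (h0 : P0 E α m) (h2 : P2 E α) {s : ℕ} {w w' : V}
    (hw : w ∈ descN E (s+1) α) (hw' : w' ∈ descN E (s+1) α) :
    (NwA E α w).ncard = (NwA E α w').ncard := by
  obtain ⟨g, hg, hgα, hgw⟩ := h2 (s+1) w hw w' hw'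
  rw [← hgw, NwA_image hg hgα, Set.ncard_image_of_injective _ g.injective]

theorem level_ne_root (h0 : P0 E α m) {x : V} {s : ℕ}
    (hx : x ∈ descN E (s+1) α) : x ≠ α := by
  intro h
  subst h
  exact Nat.succ_ne_zero s (level_unique h0 hx rfl)

/- ===== The main contradiction: the deleted digraph cannot connect level 1 ===== -/

theorem not_all_connected (hroot : Rooted E α) (h0 : P0 E α m) (h1 : P1 E)
    (h2 : P2 E α) (h3 : P3 E α) :
    ¬ (∀ u v, u ∈ descN E 1 α → v ∈ descN E 1 α →
        Relation.ReflTransGen (fun a b => a ≠ α ∧ b ≠ α ∧ (E a b ∨ E b a)) u v) := by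
  intro Hconn
  classical
  -- every non-root vertex has a level-1 ancestor
  have hA_ne : ∀ z : V, z ≠ α → ∃ a, a ∈ descN E 1 α ∧ z ∈ desc E a := by
    intro z hz
    obtain ⟨ℓ, hℓ⟩ := hroot z
    cases ℓ with
    | zero => exact absurd (show α = z from hℓ).symm hz
    | succ ℓ' =>
        have h' : arcOf E (1 + ℓ') α z := by
          rwa [show 1 + ℓ' = ℓ' + 1 by omega]
        obtain ⟨a, ha1, har⟩ := arcOf_split h'
        exact ⟨a, ha1, ℓ', har⟩
  -- base case: level 1 is one meet-class
  have Hbase : ∀ u v, u ∈ descN E 1 α → v ∈ descN E 1 α →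
      Relation.ReflTransGen (meetRel E α 1) u v := by
    intro u v hu hv
    have h := Hconn u v hu hv
    have key : ∀ a, a ∈ descN E 1 α → u ∈ desc E a → ∀ b, b ∈ descN E 1 α → v ∈ desc E b →
        Relation.ReflTransGen (meetRel E α 1) a b := by
      clear hv
      induction h with
      | refl =>
          intro a ha hua b hb hub
          exact Relation.ReflTransGen.single ⟨ha, hb, u, hua, hub⟩
      | @tail c c' hxc hcc' ih =>
          intro a ha hua b hb hb'
          obtain ⟨x, hx1, hxc'⟩ := hA_ne c hcc'.1
          refine (ih a ha hua x hx1 hxc').trans (Relation.ReflTransGen.single ?_)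
          rcases hcc'.2.2 with hE | hE
          · exact ⟨hx1, hb, c', desc_of_edge hxc' hE, hb'⟩
          · exact ⟨hx1, hb, c, hxc', desc_of_edge hb' hE⟩
    exact key u hu (self_mem_desc E u) v hv (self_mem_desc E v)
  -- transfer: out-neighbours of any vertex are one meet-class one level down
  have trans_sib : ∀ j x, x ∈ descN E j α → ∀ x' x'', E x x' → E x x'' →
      Relation.ReflTransGen (meetRel E α (j+1)) x' x'' := by
    intro j x hx x' x'' hx' hx''
    obtain ⟨f, hf⟩ := h1 x
    have hfx : f ⟨x, self_mem_desc E x⟩ = α := iso_root h0 hroot f hf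
    have hfsymmα : f.symm α = ⟨x, self_mem_desc E x⟩ := by rw [← hfx]; simp
    have hmem : ∀ y (hy : E x y), f ⟨y, ⟨1, ⟨y, hy, rfl⟩⟩⟩ ∈ descN E 1 α := by
      intro y hy
      have h : E (f ⟨x, self_mem_desc E x⟩) (f ⟨y, ⟨1, ⟨y, hy, rfl⟩⟩⟩) :=
        (hf _ _).mp hy
      rw [hfx] at h
      exact ⟨_, h, rfl⟩
    have chain := Hbase _ _ (hmem x' hx') (hmem x'' hx'')
    have lift : ∀ a b, meetRel E α 1 a b →
        meetRel E α (j+1) ((f.symm a) : V) ((f.symm b) : V) := by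
      rintro a b ⟨ha, hb, z, ⟨n, hza⟩, ⟨n', hzb⟩⟩
      have hEαa : E α a := by rwa [descN_one] at ha
      have hEαb : E α b := by rwa [descN_one] at hb
      have hEa : E ((f.symm α : desc E x) : V) ((f.symm a : desc E x) : V) :=
        (hf _ _).mpr (by simpa using hEαa)
      have hEb : E ((f.symm α : desc E x) : V) ((f.symm b : desc E x) : V) :=
        (hf _ _).mpr (by simpa using hEαb)
      rw [hfsymmα] at hEa hEb
      refine ⟨edge_level hx hEa, edge_level hx hEb, (f.symm z : V), ?_, ?_⟩
      · exact ⟨n, iso_arc_map_inv f hf a z hza⟩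
      · exact ⟨n', iso_arc_map_inv f hf b z hzb⟩
    have := Relation.ReflTransGen.lift (fun c => ((f.symm c : desc E x) : V)) lift _ _ chain
    simpa [Function.onFun] using this
  -- every level is one meet-class
  have CJ : ∀ k, ∀ x y, x ∈ descN E (k+1) α → y ∈ descN E (k+1) α →
      Relation.ReflTransGen (meetRel E α (k+1)) x y := by
    intro k
    induction k with
    | zero => exact Hbase
    | succ k ih =>
        intro x' y' hx' hy'
        obtain ⟨x, hx, hxx'⟩ := in_nbr hx'
        obtain ⟨y, hy, hyy'⟩ := in_nbr hy'
        have hxy := ih x y hx hy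
        have key : ∀ c', E y c' →
            Relation.ReflTransGen (meetRel E α (k+1+1)) x' c' := by
          clear hyy' hy' hy
          induction hxy with
          | refl => intro c' hc'; exact trans_sib (k+1) x hx x' c' hxx' hc'
          | @tail b c hxb hbc ihh =>
              intro c' hcc'
              obtain ⟨hbL, hcL, z, ⟨n, hzb⟩, ⟨n', hzc⟩⟩ := hbc
              obtain ⟨b', hbb'⟩ := outSet_nonempty h0 b
              have hx'b' := ihh b' hbb'
              by_cases hbc_eq : b = c
              · subst hbc_eq
                exact hx'b'.trans (trans_sib (k+1) b hbL b' c' hbb' hcc')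
              · have hzlev : z ∈ descN E (k+1+n) α := level_of_desc hbL hzb
                have hzlev' : z ∈ descN E (k+1+n') α := level_of_desc hcL hzc
                have hnn' : n = n' := by
                  have := level_unique h0 hzlev hzlev'; omega
                subst hnn'
                cases n with
                | zero =>
                    have hb0 : b = z := hzb
                    have hc0 : c = z := hzc
                    exact absurd (hb0.trans hc0.symm) hbc_eq
                | succ n =>
                    obtain ⟨b1, hbb1, hb1z⟩ := hzb
                    obtain ⟨c1, hcc1, hc1z⟩ := hzc
                    have m1 : meetRel E α (k+1+1) b1 c1 :=
                      ⟨edge_level hbL hbb1, edge_level hcL hcc1, z, ⟨n, hb1z⟩, ⟨n, hc1z⟩⟩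
                    exact ((hx'b'.trans (trans_sib (k+1) b hbL b' b1 hbb' hbb1)).trans
                      (Relation.ReflTransGen.single m1)).trans
                      (trans_sib (k+1) c hcL c1 c' hcc1 hcc')
        exact key y' hyy'
  -- the ancestor-count function and its stabilization
  have hLne : ∀ s, (descN E s α).Nonempty := descN_nonempty h0 α
  choose wit hwit using fun s => hLne (s+1)
  set d : ℕ → ℕ := fun s => (NwA E α (wit s)).ncard with hd
  have cardNw : ∀ s (w : V), w ∈ descN E (s+1) α → (NwA E α w).ncard = d s := by
    intro s w hw
    exact card_NwA_level h0 h2 hw (hwit s)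
  have hNwfin : ∀ z : V, (NwA E α z).Finite :=
    fun z => (level_finite h0 1).subset (NwA_subset_L1 z)
  have dmono : Monotone d := by
    apply monotone_nat_of_le_succ
    intro s
    obtain ⟨w', hw'⟩ := outSet_nonempty h0 (wit s)
    have h1' : w' ∈ descN E (s+1+1) α := edge_level (hwit s) hw'
    calc d s = (NwA E α (wit s)).ncard := rfl
      _ ≤ (NwA E α w').ncard := Set.ncard_le_ncard (NwA_mono_edge hw') (hNwfin w')
      _ = d (s+1) := cardNw (s+1) w' h1'
  have dbdd : ∀ s, d s ≤ m := by
    intro s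
    calc d s = (NwA E α (wit s)).ncard := rfl
      _ ≤ (descN E 1 α).ncard :=
          Set.ncard_le_ncard (NwA_subset_L1 (wit s)) (level_finite h0 1)
      _ = m := card_level_one h0
  obtain ⟨S, hS⟩ : ∃ S, ∀ s, S ≤ s → d s = d S := by
    have hb : BddAbove (Set.range d) := ⟨m, by rintro _ ⟨s, rfl⟩; exact dbdd s⟩
    obtain ⟨S, hSv⟩ := Nat.sSup_mem (s := Set.range d) ⟨d 0, 0, rfl⟩ hb
    exact ⟨S, fun s hs => le_antisymm (hSv ▸ le_csSup hb ⟨s, rfl⟩) (dmono hs)⟩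
  -- NwA constant at high levels
  have Nw_step : ∀ s, S ≤ s → ∀ w w', w ∈ descN E (s+1) α → E w w' →
      NwA E α w = NwA E α w' := by
    intro s hs w w' hw hE
    have hw' := edge_level hw hE
    apply Set.eq_of_subset_of_ncard_le (NwA_mono_edge hE) _ (hNwfin w')
    rw [cardNw (s+1) w' hw', cardNw s w hw, hS (s+1) (by omega), hS s hs]
  have Nw_desc : ∀ n s, S ≤ s → ∀ w z, w ∈ descN E (s+1) α → arcOf E n w z →
      NwA E α w = NwA E α z := by
    intro n
    induction n with
    | zero => intro s _ w z _ h; rw [show w = z from h]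
    | succ n ih =>
        intro s hs w z hw h
        obtain ⟨w1, hww1, h1z⟩ := h
        rw [Nw_step s hs w w1 hw hww1]
        exact ih (s+1) (by omega) w1 z (edge_level hw hww1) h1z
  have Nw_meet : ∀ x y, meetRel E α (S+1) x y → NwA E α x = NwA E α y := by
    rintro x y ⟨hx, hy, z, ⟨n, hzx⟩, ⟨n', hzy⟩⟩
    rw [Nw_desc n S le_rfl x z hx hzx, ← Nw_desc n' S le_rfl y z hy hzy]
  have Nw_level : ∀ x y, x ∈ descN E (S+1) α → y ∈ descN E (S+1) α →
      NwA E α x = NwA E α y := by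
    intro x y hx hy
    have h := CJ S x y hx hy
    clear hy
    induction h with
    | refl => rfl
    | tail _ hbc ihh => exact ihh.trans (Nw_meet _ _ hbc)
  -- final contradiction with P3
  obtain ⟨u, hu⟩ := hLne 1
  have hall : ∀ x, x ∈ descN E (S+1) α → x ∈ desc E u := by
    intro x hx
    obtain ⟨xu, hxu⟩ := descN_nonempty h0 u S
    have hxuL : xu ∈ descN E (S+1) α := by
      have := level_of_desc hu hxu
      rwa [show 1 + S = S + 1 by omega] at this
    have hmem : u ∈ NwA E α xu := ⟨hu, S, hxu⟩
    rw [Nw_level xu x hxuL hx] at hmem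
    exact hmem.2
  have hsub : descN E (S+1) α ⊆ descN E S u := by
    intro x hx
    obtain ⟨n, hn⟩ := hall x hx
    have hx' : x ∈ descN E (1+n) α := level_of_desc hu hn
    have hq : 1 + n = S + 1 := level_unique h0 hx' hx
    have hnS : n = S := by omega
    rwa [hnS] at hn
  have hfin : (descN E S u).Finite := by
    apply (level_finite h0 (1+S)).subset
    intro x hx
    exact level_of_desc hu hx
  have hle : (descN E (S+1) α).ncard ≤ (descN E S u).ncard :=
    Set.ncard_le_ncard hsub hfin
  rw [card_descN h0 hroot h1 u S] at hle
  exact absurd hle (not_le.mpr (h3 S))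

/- ===== descendants stay in the deleted digraph and give infinite components ===== -/

theorem desc_rtg (h0 : P0 E α m) :
    ∀ (n t : ℕ) (x w : V), x ∈ descN E (t+1) α → arcOf E n x w →
      Relation.ReflTransGen (fun a b => a ≠ α ∧ b ≠ α ∧ (E a b ∨ E b a)) x w := by
  intro n
  induction n with
  | zero => intro t x w _ h; rw [show x = w from h]
  | succ n ih =>
      rintro t x w hx ⟨z, hxz, hz⟩
      have hzL : z ∈ descN E (t+1+1) α := edge_level hx hxz
      exact Relation.ReflTransGen.head
        ⟨level_ne_root h0 hx, level_ne_root h0 hzL, Or.inl hxz⟩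
        (ih (t+1) z w hzL hz)

theorem desc_infinite (h0 : P0 E α m) (hroot : Rooted E α) (h1 : P1 E) (x : V) :
    (desc E x).Infinite := by
  classical
  choose F hF using fun n => descN_nonempty h0 x n
  obtain ⟨t, ht⟩ := hroot x
  apply Set.infinite_of_injective_forall_mem (f := F)
  · intro n n' hnn'
    have h1' : F n ∈ descN E (t+n) α := level_of_desc ht (hF n)
    have h2' : F n' ∈ descN E (t+n') α := level_of_desc ht (hF n')
    rw [hnn'] at h1'
    have := level_unique h0 h1' h2'
    omega
  · intro n
    exact ⟨n, hF n⟩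
end AuxDev

/-- deleting the root leaves at least two infinite (undirected)
connected components. -/
theorem delete_root_two_infinite_components (E : V → V → Prop) (α : V) (m : ℕ)
    (hroot : Rooted E α) (h0 : P0 E α m) (h1 : P1 E) (h2 : P2 E α) (h3 : P3 E α) :
    ∃ u v : V, u ≠ α ∧ v ≠ α ∧
      ¬ Relation.ReflTransGen (fun a b => a ≠ α ∧ b ≠ α ∧ (E a b ∨ E b a)) u v ∧
      {w | Relation.ReflTransGen (fun a b => a ≠ α ∧ b ≠ α ∧ (E a b ∨ E b a)) u w}.Infinite ∧
      {w | Relation.ReflTransGen (fun a b => a ≠ α ∧ b ≠ α ∧ (E a b ∨ E b a)) v w}.Infinite := by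
  classical
  have hna := not_all_connected hroot h0 h1 h2 h3
  push_neg at hna
  obtain ⟨u, v, hu, hv, hnc⟩ := hna
  have hu1 : u ∈ descN E (0+1) α := by simpa using hu
  have hv1 : v ∈ descN E (0+1) α := by simpa using hv
  have comp_inf : ∀ x : V, x ∈ descN E (0+1) α →
      {w | Relation.ReflTransGen (fun a b => a ≠ α ∧ b ≠ α ∧ (E a b ∨ E b a)) x w}.Infinite := by
    intro x hx
    have hsub : desc E x ⊆
        {w | Relation.ReflTransGen (fun a b => a ≠ α ∧ b ≠ α ∧ (E a b ∨ E b a)) x w} := by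
      rintro w ⟨n, hn⟩
      exact desc_rtg h0 n 0 x w hx hn
    exact (desc_infinite h0 hroot h1 x).mono hsub
  exact ⟨u, v, level_ne_root h0 hu1, level_ne_root h0 hv1, hnc,
    comp_inf u hu1, comp_inf v hv1⟩
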